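/- Let C ∈ ℂ^r have Euclidean norm 1, let Φ = (φ₁,…,φ_K) be an orthonormal system in L²(Ω), and set Ψ = π(C,Φ). Then for every ζ ∈ L²(Ω) with ⟨ζ, φ_m⟩ = 0 for all 1 ≤ m ≤ K, every ξ ∈ L²(Ω), and all 1 ≤ k,l ≤ K: ⟨(∂Ψ/∂φ_k)[ζ], (∂Ψ/∂φ_l)[ξ]⟩_{L²(Ω^N)} = γ_kl(C) · ⟨ζ, ξ⟩_{L²(Ω)}. -/

import Mathlib

open MeasureTheory Complex
open scoped BigOperators ComplexConjugate ENNReal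

noncomputable section

abbrev E3 : Type := EuclideanSpace ℝ (Fin 3)

def mOm (Ω : Set E3) : Measure E3 := MeasureTheory.volume.restrict Ω

def mN (Ω : Set E3) (n : ℕ) : Measure (Fin n → E3) := Measure.pi fun _ => mOm Ω

def ip2 (Ω : Set E3) (f g : E3 → ℂ) : ℂ := ∫ x, f x * conj (g x) ∂ (mOm Ω)

def ipN (Ω : Set E3) (n : ℕ) (f g : (Fin n → E3) → ℂ) : ℂ :=
  ∫ x, f x * conj (g x) ∂ (mN Ω n)

def slater (n : ℕ) (φ : Fin n → E3 → ℂ) : (Fin n → E3) → ℂ := fun x =>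
  ((Real.sqrt (Nat.factorial n) : ℂ))⁻¹ * Matrix.det (Matrix.of fun i j : Fin n => φ i (x j))

def SigmaNK (N K : ℕ) : Type := {s : Finset (Fin K) // s.card = N}

instance (N K : ℕ) : Fintype (SigmaNK N K) :=
  inferInstanceAs (Fintype {s : Finset (Fin K) // s.card = N})

instance (N K : ℕ) : DecidableEq (SigmaNK N K) :=
  inferInstanceAs (DecidableEq {s : Finset (Fin K) // s.card = N})

def embOf {N K : ℕ} (σ : SigmaNK N K) : Fin N → Fin K := fun i => σ.1.orderEmbOfFin σ.2 i

def slaterSel (N K : ℕ) (Φ : Fin K → E3 → ℂ) (σ : SigmaNK N K) : (Fin N → E3) → ℂ :=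
  slater N fun i => Φ (embOf σ i)

def mc (N K : ℕ) (C : SigmaNK N K → ℂ) (Φ : Fin K → E3 → ℂ) : (Fin N → E3) → ℂ :=
  fun x => ∑ σ : SigmaNK N K, C σ * slaterSel N K Φ σ x

def posIn {K : ℕ} (s : Finset (Fin K)) (i : Fin K) : ℕ :=
  (Finset.sort s (· ≤ ·)).idxOf i

def gamma1 (N K : ℕ) (C : SigmaNK N K → ℂ) (i j : Fin K) : ℂ :=
  ∑ σ : SigmaNK N K, ∑ τ : SigmaNK N K,
    if i ∈ σ.1 ∧ j ∈ τ.1 ∧ σ.1.erase i = τ.1.erase j then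
      (-1 : ℂ) ^ (posIn σ.1 i + posIn τ.1 j) * C σ * conj (C τ)
    else 0

def sgn2 {K : ℕ} (s : Finset (Fin K)) (i j : Fin K) : ℂ :=
  (if i = j then 0 else if j < i then 1 else -1) *
    (-1 : ℂ) ^ (posIn s i + posIn s j)

def gamma2 (N K : ℕ) (C : SigmaNK N K → ℂ) (i j k l : Fin K) : ℂ :=
  (1 / 2 : ℂ) * ∑ σ : SigmaNK N K, ∑ τ : SigmaNK N K,
    if i ∈ σ.1 ∧ j ∈ σ.1 ∧ k ∈ τ.1 ∧ l ∈ τ.1 ∧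
        (σ.1.erase i).erase j = (τ.1.erase k).erase l then
      sgn2 σ.1 i j * sgn2 τ.1 k l * C σ * conj (C τ)
    else 0

def GammaM (N K : ℕ) (C : SigmaNK N K → ℂ) : Matrix (Fin K) (Fin K) ℂ :=
  Matrix.of fun i j => conj (gamma1 N K C i j)

def OrthoSys (Ω : Set E3) {K : ℕ} (Φ : Fin K → E3 → ℂ) : Prop :=
  (∀ k, MemLp (Φ k) 2 (mOm Ω)) ∧
  ∀ i j, ip2 Ω (Φ i) (Φ j) = if i = j then 1 else 0

def dPhi (Ω : Set E3) (n : ℕ) (Ξ : (Fin n → E3) → ℂ) (φ ζ : E3 → ℂ) :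
    (Fin n → E3) → ℂ := fun x =>
  ∑ i : Fin n, ζ (x i) * ∫ y, Ξ (Function.update x i y) * conj (φ y) ∂ (mOm Ω)

def gammaFun (Ω : Set E3) (N : ℕ) (Ψ : (Fin (N+1) → E3) → ℂ) (f : E3 → ℂ) : E3 → ℂ :=
  fun x => ((N : ℂ) + 1) *
    ∫ y, (∫ Z, Ψ (Fin.cons x Z) * conj (Ψ (Fin.cons y Z)) ∂ (mN Ω N)) * f y ∂ (mOm Ω)


/-- A permutation of `Fin n` is determined by its value at `a` and strict monotonicity off `a`. -/
lemma perm_eq_of_strictMonoOn {n : ℕ} (a : Fin n) (q r : Equiv.Perm (Fin n))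
    (hq : StrictMonoOn q {x | x ≠ a}) (hr : StrictMonoOn r {x | x ≠ a})
    (hqa : q a = r a) : q = r := by
  have hcard : (Finset.univ.erase a).card = n - 1 := by
    simp [Finset.card_erase_of_mem]
  set E := (Finset.univ.erase a).orderEmbOfFin hcard with hE
  have hEmem : ∀ x, E x ∈ Finset.univ.erase a := fun x =>
    Finset.orderEmbOfFin_mem _ hcard x
  have hEne : ∀ x, E x ≠ a := fun x => (Finset.mem_erase.mp (hEmem x)).1
  have hcard2 : (Finset.univ.erase (q a)).card = n - 1 := by
    simp [Finset.card_erase_of_mem]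
  have hqE : (fun x => q (E x)) = (Finset.univ.erase (q a)).orderEmbOfFin hcard2 := by
    apply Finset.orderEmbOfFin_unique
    · intro x
      simp [Finset.mem_erase, q.injective.ne (hEne x)]
    · intro x y hxy
      exact hq (hEne x) (hEne y) (E.strictMono hxy)
  have hrE : (fun x => r (E x)) = (Finset.univ.erase (q a)).orderEmbOfFin hcard2 := by
    apply Finset.orderEmbOfFin_unique
    · intro x
      rw [hqa]
      simp [Finset.mem_erase, r.injective.ne (hEne x)]
    · intro x y hxy
      exact hr (hEne x) (hEne y) (E.strictMono hxy)
  ext x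
  rcases eq_or_ne x a with rfl | hx
  · exact congrArg Fin.val hqa
  · have hxmem : x ∈ Finset.univ.erase a := Finset.mem_erase.mpr ⟨hx, Finset.mem_univ x⟩
    have : x ∈ Set.range E := by
      rw [Finset.range_orderEmbOfFin]
      exact Finset.mem_coe.mpr hxmem
    obtain ⟨c, rfl⟩ := this
    exact congrArg Fin.val (congrFun (hqE.trans hrE.symm) c)

lemma strictMonoOn_cycleRange {n : ℕ} (i : Fin (n+1)) :
    StrictMonoOn (Fin.cycleRange i) {x | x ≠ i} := by
  intro x hx y hy hxy
  rcases lt_or_gt_of_ne (hx : x ≠ i) with hxi | hxi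
  · rcases lt_or_gt_of_ne (hy : y ≠ i) with hyi | hyi
    · rw [Fin.cycleRange_of_lt hxi, Fin.cycleRange_of_lt hyi]
      have hx1 : (x:ℕ) + 1 < n + 1 := Nat.lt_of_le_of_lt (Nat.succ_le_of_lt hxi) i.isLt
      have hy1 : (y:ℕ) + 1 < n + 1 := Nat.lt_of_le_of_lt (Nat.succ_le_of_lt hyi) i.isLt
      rw [Fin.lt_iff_val_lt_val, Fin.val_add_one_of_lt (by exact Fin.lt_of_lt_of_le hxi i.le_last),
        Fin.val_add_one_of_lt (by exact Fin.lt_of_lt_of_le hyi i.le_last)]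
      exact Nat.succ_lt_succ hxy
    · rw [Fin.cycleRange_of_lt hxi, Fin.cycleRange_of_gt hyi]
      rw [Fin.lt_iff_val_lt_val, Fin.val_add_one_of_lt (by exact Fin.lt_of_lt_of_le hxi i.le_last)]
      exact Nat.lt_of_le_of_lt (Nat.succ_le_of_lt hxi) hyi
  · have hyi : i < y := lt_trans hxi hxy
    rw [Fin.cycleRange_of_gt hxi, Fin.cycleRange_of_gt hyi]
    exact hxy

lemma exists_perm_shift {n K : ℕ} (σ τ : Finset (Fin K))
    (hσ : σ.card = n+1) (hτ : τ.card = n+1) (k l : Fin K)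
    (hk : k ∈ σ) (hl : l ∈ τ) (he : σ.erase k = τ.erase l)
    (a b : Fin (n+1)) (ha : σ.orderEmbOfFin hσ a = k) (hb : τ.orderEmbOfFin hτ b = l) :
    ∃ p : Equiv.Perm (Fin (n+1)), p a = b ∧
      (∀ c, c ≠ a → τ.orderEmbOfFin hτ (p c) = σ.orderEmbOfFin hσ c) ∧
      Equiv.Perm.sign p = (-1)^((a:ℕ)+(b:ℕ)) := by
  set eσ := σ.orderEmbOfFin hσ
  set eτ := τ.orderEmbOfFin hτ
  have hmem : ∀ c : Fin (n+1), c ≠ a → eσ c ∈ τ.erase l := by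
    intro c hc
    rw [← he]
    refine Finset.mem_erase.mpr ⟨?_, Finset.orderEmbOfFin_mem _ hσ c⟩
    intro hck
    exact hc (eσ.injective (hck.trans ha.symm))
  set Iτ := τ.orderIsoOfFin hτ with hIτ
  have hIτcoe : ∀ x, (Iτ x : Fin K) = eτ x := fun x => Finset.coe_orderIsoOfFin_apply τ hτ x
  set u : Fin (n+1) → Fin (n+1) := fun c =>
    if h : c = a then b else Iτ.symm ⟨eσ c, Finset.mem_of_mem_erase (hmem c h)⟩ with hu
  have hua : u a = b := by simp [hu]
  have huc : ∀ c, c ≠ a → eτ (u c) = eσ c := by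
    intro c hc
    simp only [hu, dif_neg hc]
    rw [← hIτcoe, Iτ.apply_symm_apply]
  have huinj : Function.Injective u := by
    intro c c' hcc
    by_cases hc : c = a
    · by_cases hc' : c' = a
      · rw [hc, hc']
      · exfalso
        have h2 : eτ (u c') = eσ c' := huc c' hc'
        rw [← hcc, hc, hua, hb] at h2
        exact (Finset.mem_erase.mp (hmem c' hc')).1 h2.symm
    · by_cases hc' : c' = a
      · exfalso
        have h2 : eτ (u c) = eσ c := huc c hc
        rw [hcc, hc', hua, hb] at h2
        exact (Finset.mem_erase.mp (hmem c hc)).1 h2.symm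
      · have h2 : eτ (u c) = eτ (u c') := congrArg eτ hcc
        rw [huc c hc, huc c' hc'] at h2
        exact eσ.injective h2
  set p : Equiv.Perm (Fin (n+1)) := Equiv.ofBijective u (Finite.injective_iff_bijective.mp huinj)
  have hpa : p a = b := hua
  have hpc : ∀ c, c ≠ a → eτ (p c) = eσ c := huc
  refine ⟨p, hpa, hpc, ?_⟩
  -- sign computation
  have hpne : ∀ c, c ≠ a → p c ≠ b := by
    intro c hc hcb
    exact hc (p.injective (hcb.trans hpa.symm))
  have hpmono : StrictMonoOn p {x | x ≠ a} := by
    intro x hx y hy hxy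
    have : eτ (p x) < eτ (p y) := by
      rw [hpc x hx, hpc y hy]
      exact eσ.strictMono hxy
    exact eτ.lt_iff_lt.mp this
  have hcomp : (Fin.cycleRange b) * p = Fin.cycleRange a := by
    apply perm_eq_of_strictMonoOn a
    · intro x hx y hy hxy
      simp only [Equiv.Perm.mul_apply]
      exact strictMonoOn_cycleRange b (hpne x hx) (hpne y hy) (hpmono hx hy hxy)
    · exact strictMonoOn_cycleRange a
    · simp [Equiv.Perm.mul_apply, hpa, Fin.cycleRange_self]
  have hp : p = (Fin.cycleRange b)⁻¹ * Fin.cycleRange a := by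
    rw [← hcomp]; group
  rw [hp, map_mul, map_inv, Fin.sign_cycleRange, Fin.sign_cycleRange]
  rw [pow_add]
  simp [inv_pow, mul_comm]


def sgnC {n : ℕ} (π : Equiv.Perm (Fin n)) : ℂ := ((Equiv.Perm.sign π : ℤ) : ℂ)

lemma embOf_injective {N K : ℕ} (σ : SigmaNK N K) : Function.Injective (embOf σ) :=
  fun x y h => (σ.1.orderEmbOfFin σ.2).injective h

lemma posIn_embOf {N K : ℕ} (σ : SigmaNK N K) (c : Fin N) : posIn σ.1 (embOf σ c) = (c : ℕ) := by
  have h2 := Finset.orderIsoOfFin_symm_apply σ.1 σ.2 (σ.1.orderIsoOfFin σ.2 c)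
  rw [OrderIso.symm_apply_apply] at h2
  have h3 : (c : ℕ) = (Finset.sort σ.1 (· ≤ ·)).idxOf (embOf σ c) := by
    convert h2 using 3
    all_goals first
      | exact Subsingleton.elim _ _
      | exact (Finset.coe_orderIsoOfFin_apply σ.1 σ.2 c).symm
  exact h3.symm

lemma exists_embOf_eq {N K : ℕ} (σ : SigmaNK N K) {k : Fin K} (hk : k ∈ σ.1) :
    ∃ a : Fin N, embOf σ a = k := by
  have : k ∈ Set.range (σ.1.orderEmbOfFin σ.2) := by
    rw [Finset.range_orderEmbOfFin]; exact hk
  obtain ⟨a, ha⟩ := this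
  exact ⟨a, ha⟩

lemma perm_apply_inv_self' {α : Type*} (π : Equiv.Perm α) (c : α) : π (π⁻¹ c) = c :=
  (Equiv.eq_symm_apply π).mp rfl

lemma perm_inv_apply_self' {α : Type*} (π : Equiv.Perm α) (c : α) : π⁻¹ (π c) = c :=
  Equiv.Perm.inv_eq_iff_eq.mpr rfl

lemma erase_eq_of_agree {n K : ℕ} (σ τ : SigmaNK n K) (k l : Fin K) (i : Fin n)
    (π ρ : Equiv.Perm (Fin n))
    (h1 : embOf σ (π i) = k) (h2 : embOf τ (ρ i) = l)
    (h3 : ∀ b ∈ Finset.univ.erase i, embOf σ (π b) = embOf τ (ρ b)) :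
    σ.1.erase k = τ.1.erase l := by
  ext x
  simp only [Finset.mem_erase]
  constructor
  · rintro ⟨hxk, hxσ⟩
    obtain ⟨c, hc⟩ := exists_embOf_eq σ hxσ
    have hdi : π⁻¹ c ≠ i := by
      intro hdi
      apply hxk
      rw [← hc, ← h1]
      congr 1
      rw [← hdi, perm_apply_inv_self']
    have hx' : embOf τ (ρ (π⁻¹ c)) = x := by
      rw [← h3 (π⁻¹ c) (Finset.mem_erase.mpr ⟨hdi, Finset.mem_univ _⟩),
        perm_apply_inv_self', hc]
    constructor
    · intro hxl
      rw [hxl, ← h2] at hx'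
      exact hdi (ρ.injective (embOf_injective τ hx'))
    · rw [← hx']
      exact Finset.orderEmbOfFin_mem _ _ _
  · rintro ⟨hxl, hxτ⟩
    obtain ⟨c, hc⟩ := exists_embOf_eq τ hxτ
    have hdi : ρ⁻¹ c ≠ i := by
      intro hdi
      apply hxl
      rw [← hc, ← h2]
      congr 1
      rw [← hdi, perm_apply_inv_self']
    have hx' : embOf σ (π (ρ⁻¹ c)) = x := by
      rw [h3 (ρ⁻¹ c) (Finset.mem_erase.mpr ⟨hdi, Finset.mem_univ _⟩),
        perm_apply_inv_self', hc]
    constructor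
    · intro hxk
      rw [hxk, ← h1] at hx'
      exact hdi (π.injective (embOf_injective σ hx'))
    · rw [← hx']
      exact Finset.orderEmbOfFin_mem _ _ _

lemma sgnC_mul {n : ℕ} (π ρ : Equiv.Perm (Fin n)) : sgnC (π * ρ) = sgnC π * sgnC ρ := by
  simp [sgnC, map_mul]

lemma sgnC_sq {n : ℕ} (π : Equiv.Perm (Fin n)) : sgnC π * sgnC π = 1 := by
  have h := Int.units_mul_self (Equiv.Perm.sign π)
  simp only [sgnC]
  rw [← Int.cast_mul, ← Units.val_mul, h]
  simp

lemma master_sum {n K : ℕ} (σ τ : SigmaNK (n+1) K) (k l : Fin K) :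
    (∑ i : Fin (n+1), ∑ π : Equiv.Perm (Fin (n+1)), ∑ ρ : Equiv.Perm (Fin (n+1)),
      (if embOf σ (π i) = k ∧ embOf τ (ρ i) = l ∧
          (∀ b ∈ Finset.univ.erase i, embOf σ (π b) = embOf τ (ρ b))
        then sgnC π * sgnC ρ else 0))
    = if k ∈ σ.1 ∧ l ∈ τ.1 ∧ σ.1.erase k = τ.1.erase l
      then ((n+1).factorial : ℂ) * (-1)^(posIn σ.1 k + posIn τ.1 l) else 0 := by
  by_cases hcond : k ∈ σ.1 ∧ l ∈ τ.1 ∧ σ.1.erase k = τ.1.erase l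
  · obtain ⟨hk, hl, he⟩ := hcond
    obtain ⟨a, ha⟩ := exists_embOf_eq σ hk
    obtain ⟨b, hb⟩ := exists_embOf_eq τ hl
    obtain ⟨p, hpa, hpc, hsign⟩ := exists_perm_shift σ.1 τ.1 σ.2 τ.2 k l hk hl he a b ha hb
    rw [if_pos ⟨hk, hl, he⟩]
    rw [Finset.sum_comm]
    have hπ : ∀ π : Equiv.Perm (Fin (n+1)),
        (∑ i : Fin (n+1), ∑ ρ : Equiv.Perm (Fin (n+1)),
          (if embOf σ (π i) = k ∧ embOf τ (ρ i) = l ∧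
              (∀ b ∈ Finset.univ.erase i, embOf σ (π b) = embOf τ (ρ b))
            then sgnC π * sgnC ρ else 0)) = sgnC p := by
      intro π
      rw [Finset.sum_eq_single (π⁻¹ a)]
      · rw [Finset.sum_eq_single (p * π)]
        · rw [if_pos, sgnC_mul, mul_comm (sgnC p) (sgnC π), ← mul_assoc, sgnC_sq, one_mul]
          refine ⟨?_, ?_, ?_⟩
          · rw [perm_apply_inv_self', ha]
          · show embOf τ ((p * π) (π⁻¹ a)) = l
            rw [Equiv.Perm.mul_apply, perm_apply_inv_self', hpa, hb]
          · intro c hc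
            have hci : c ≠ π⁻¹ a := (Finset.mem_erase.mp hc).1
            have : π c ≠ a := by
              intro hpc2
              exact hci (by rw [← hpc2, perm_inv_apply_self'])
            exact (hpc (π c) this).symm
        · intro ρ _ hρ
          rw [if_neg]
          rintro ⟨h1, h2, h3⟩
          apply hρ
          apply Equiv.ext
          intro d
          by_cases hdi : d = π⁻¹ a
          · rw [hdi]
            apply embOf_injective τ
            show embOf τ (ρ (π⁻¹ a)) = embOf τ ((p * π) (π⁻¹ a))
            rw [h2, Equiv.Perm.mul_apply, perm_apply_inv_self', hpa, hb]
          · apply embOf_injective τ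
            show embOf τ (ρ d) = embOf τ ((p * π) d)
            have hπd : π d ≠ a := by
              intro hh
              exact hdi (by rw [← hh, perm_inv_apply_self'])
            rw [← h3 d (Finset.mem_erase.mpr ⟨hdi, Finset.mem_univ d⟩),
              Equiv.Perm.mul_apply]
            exact (hpc (π d) hπd).symm
        · intro h
          exact absurd (Finset.mem_univ _) h
      · intro i _ hi
        apply Finset.sum_eq_zero
        intro ρ _
        rw [if_neg]
        rintro ⟨h1, _, _⟩
        apply hi
        have : π i = a := embOf_injective σ (by rw [h1, ha] : embOf σ (π i) = embOf σ a)
        rw [← this, perm_inv_apply_self']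
      · intro h
        exact absurd (Finset.mem_univ _) h
    rw [Finset.sum_congr rfl (fun π _ => hπ π), Finset.sum_const]
    have hcard : (Finset.univ : Finset (Equiv.Perm (Fin (n+1)))).card = (n+1).factorial := by
      simp [Fintype.card_perm]
    rw [hcard]
    have hposk : posIn σ.1 k = (a : ℕ) := by rw [← ha]; exact posIn_embOf σ a
    have hposl : posIn τ.1 l = (b : ℕ) := by rw [← hb]; exact posIn_embOf τ b
    have hsgnp : sgnC p = (-1 : ℂ)^((a:ℕ)+(b:ℕ)) := by
      simp only [sgnC, hsign]
      push_cast
      norm_num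
    rw [hsgnp, hposk, hposl, nsmul_eq_mul]
  · rw [if_neg hcond]
    apply Finset.sum_eq_zero
    intro i _
    apply Finset.sum_eq_zero
    intro π _
    apply Finset.sum_eq_zero
    intro ρ _
    rw [if_neg]
    rintro ⟨h1, h2, h3⟩
    exact hcond ⟨h1 ▸ Finset.orderEmbOfFin_mem _ _ _,
      h2 ▸ Finset.orderEmbOfFin_mem _ _ _, erase_eq_of_agree σ τ k l i π ρ h1 h2 h3⟩


instance mOm_sigmaFinite (Ω : Set E3) : SigmaFinite (mOm Ω) :=
  inferInstanceAs (SigmaFinite (MeasureTheory.volume.restrict Ω))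

lemma memℒp_conj {μ : Measure E3} {g : E3 → ℂ} (hg : MemLp g 2 μ) :
    MemLp (fun x => conj (g x)) 2 μ := by
  refine ⟨continuous_star.comp_aestronglyMeasurable hg.1, ?_⟩
  have : eLpNorm (fun x => conj (g x)) 2 μ = eLpNorm g 2 μ :=
    eLpNorm_congr_norm_ae (Filter.Eventually.of_forall fun x => norm_star _)
  rw [this]
  exact hg.2

lemma integrable_mul_conj {μ : Measure E3} {f g : E3 → ℂ}
    (hf : MemLp f 2 μ) (hg : MemLp g 2 μ) :
    Integrable (fun x => f x * conj (g x)) μ := by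
  have h1 : (1 : ℝ≥0∞)/1 = 1/2 + 1/2 := by
    rw [ENNReal.add_halves, one_div_one]
  have := (memℒp_conj hg).smul (φ := f) (r := 1) hf
  rw [memLp_one_iff_integrable] at this
  exact this

lemma integrable_pi_prod {n : ℕ} (μ : Measure E3) [SigmaFinite μ] (f : Fin n → E3 → ℂ)
    (hf : ∀ i, Integrable (f i) μ) :
    Integrable (fun x : Fin n → E3 => ∏ i, f i (x i)) (Measure.pi fun _ => μ) := by
  letI : MeasureSpace E3 := ⟨μ⟩
  haveI : SigmaFinite (volume : Measure E3) := ‹SigmaFinite μ›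
  exact MeasureTheory.Integrable.fin_nat_prod (f := fun i : Fin n => f i) hf

lemma integral_pi_prod {n : ℕ} (μ : Measure E3) [SigmaFinite μ] (f : Fin n → E3 → ℂ)
    (hf : ∀ i, Integrable (f i) μ) :
    ∫ x : Fin n → E3, ∏ i, f i (x i) ∂(Measure.pi fun _ => μ) = ∏ i, ∫ v, f i v ∂μ := by
  letI : MeasureSpace E3 := ⟨μ⟩
  haveI : SigmaFinite (volume : Measure E3) := ‹SigmaFinite μ›
  exact MeasureTheory.integral_fin_nat_prod_eq_prod (fun i : Fin n => f i)


def fsel {N K : ℕ} (Φ : Fin K → E3 → ℂ) (σ : SigmaNK N K) (π : Equiv.Perm (Fin N))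
    (i : Fin N) (g : E3 → ℂ) : Fin N → E3 → ℂ :=
  fun b => if b = i then g else Φ (embOf σ (π b))

lemma prod_fsel {N K : ℕ} (Φ : Fin K → E3 → ℂ) (σ : SigmaNK N K) (π : Equiv.Perm (Fin N))
    (i : Fin N) (g : E3 → ℂ) (x : Fin N → E3) :
    ∏ b, fsel Φ σ π i g b (x b)
      = g (x i) * ∏ b ∈ Finset.univ.erase i, Φ (embOf σ (π b)) (x b) := by
  rw [← Finset.mul_prod_erase Finset.univ _ (Finset.mem_univ i)]
  congr 1
  · simp [fsel]
  · exact Finset.prod_congr rfl fun b hb => by simp [fsel, (Finset.mem_erase.mp hb).1]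

lemma dPhi_expand (Ω : Set E3) (N K : ℕ) (C : SigmaNK N K → ℂ) (Φ : Fin K → E3 → ℂ)
    (hΦ : OrthoSys Ω Φ) (k : Fin K) (ζ : E3 → ℂ) (x : Fin N → E3) :
    dPhi Ω N (mc N K C Φ) (Φ k) ζ x
      = ((Real.sqrt (Nat.factorial N) : ℂ))⁻¹ *
        ∑ i : Fin N, ∑ σ : SigmaNK N K, ∑ π : Equiv.Perm (Fin N),
          (C σ * sgnC π * (if embOf σ (π i) = k then 1 else 0)) *
            ∏ b : Fin N, fsel Φ σ π i ζ b (x b) := by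
  set c0 : ℂ := ((Real.sqrt (Nat.factorial N) : ℂ))⁻¹ with hc0
  have hint : ∀ (i : Fin N) (y : E3), mc N K C Φ (Function.update x i y) * conj (Φ k y)
      = ∑ σ : SigmaNK N K, ∑ π : Equiv.Perm (Fin N),
          (c0 * (C σ * sgnC π) * ∏ b ∈ Finset.univ.erase i, Φ (embOf σ (π b)) (x b)) *
            (Φ (embOf σ (π i)) y * conj (Φ k y)) := by
    intro i y
    have hupd : ∀ (σ : SigmaNK N K) (π : Equiv.Perm (Fin N)),
        (∏ j, Φ (embOf σ (π j)) (Function.update x i y j))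
          = Φ (embOf σ (π i)) y * ∏ b ∈ Finset.univ.erase i, Φ (embOf σ (π b)) (x b) := by
      intro σ π
      rw [← Finset.mul_prod_erase Finset.univ _ (Finset.mem_univ i)]
      congr 1
      · rw [Function.update_self]
      · exact Finset.prod_congr rfl fun b hb => by
          rw [Function.update_of_ne (Finset.mem_erase.mp hb).1]
    simp only [mc, slaterSel, slater, Matrix.det_apply, Matrix.of_apply]
    simp only [hupd, Finset.sum_mul, Finset.mul_sum]
    refine Finset.sum_congr rfl fun σ _ => Finset.sum_congr rfl fun π _ => ?_
    simp only [Units.smul_def, zsmul_eq_mul, sgnC]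
    ring
  have hI : ∀ i : Fin N, (∫ y, mc N K C Φ (Function.update x i y) * conj (Φ k y) ∂ (mOm Ω))
      = ∑ σ : SigmaNK N K, ∑ π : Equiv.Perm (Fin N),
          c0 * ((C σ * sgnC π * (if embOf σ (π i) = k then 1 else 0)) *
            ∏ b ∈ Finset.univ.erase i, Φ (embOf σ (π b)) (x b)) := by
    intro i
    simp_rw [hint i]
    rw [integral_finset_sum _ (fun σ _ => integrable_finset_sum _ (fun π _ =>
      (integrable_mul_conj (hΦ.1 _) (hΦ.1 k)).const_mul _))]
    refine Finset.sum_congr rfl fun σ _ => ?_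
    rw [integral_finset_sum _ (fun π _ =>
      (integrable_mul_conj (hΦ.1 _) (hΦ.1 k)).const_mul _)]
    refine Finset.sum_congr rfl fun π _ => ?_
    rw [integral_const_mul]
    have : (∫ y, Φ (embOf σ (π i)) y * conj (Φ k y) ∂ (mOm Ω))
        = if embOf σ (π i) = k then (1:ℂ) else 0 := hΦ.2 _ k
    rw [this]
    ring
  simp only [dPhi, hI, prod_fsel]
  simp only [Finset.mul_sum]
  refine Finset.sum_congr rfl fun i _ => Finset.sum_congr rfl fun σ _ =>
    Finset.sum_congr rfl fun π _ => ?_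
  ring


lemma sgnC_conj {n : ℕ} (π : Equiv.Perm (Fin n)) : conj (sgnC π) = sgnC π := by
  simp [sgnC]

lemma coef_normalize {n K : ℕ} (c0 v z w : ℂ) (σ τ : SigmaNK (n+1) K)
    (π ρ : Equiv.Perm (Fin (n+1))) (i : Fin (n+1)) (k l : Fin K) :
    ((c0 * (z * sgnC π * (if embOf σ (π i) = k then (1:ℂ) else 0))) *
        conj (c0 * (w * sgnC ρ * (if embOf τ (ρ i) = l then (1:ℂ) else 0)))) *
      (v * ∏ b ∈ Finset.univ.erase i,
        (if embOf σ (π b) = embOf τ (ρ b) then (1:ℂ) else 0))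
    = (c0 * conj c0 * v) * (z * conj w) *
        (if (embOf σ (π i) = k ∧ embOf τ (ρ i) = l ∧
            ∀ b ∈ Finset.univ.erase i, embOf σ (π b) = embOf τ (ρ b))
          then sgnC π * sgnC ρ else 0) := by
  have hc : (starRingEnd ℂ) (sgnC ρ) = sgnC ρ := sgnC_conj ρ
  simp only [map_mul, hc, apply_ite (starRingEnd ℂ), map_one, map_zero, Finset.prod_boole]
  by_cases h1 : embOf σ (π i) = k
  · by_cases h2 : embOf τ (ρ i) = l
    · by_cases h3 : ∀ b ∈ Finset.univ.erase i, embOf σ (π b) = embOf τ (ρ b)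
      · rw [if_pos h1, if_pos h2, if_pos h3, if_pos ⟨h1, h2, h3⟩]; ring
      · rw [if_pos h1, if_pos h2, if_neg h3,
          if_neg (fun hh : _ ∧ _ ∧ _ => h3 hh.2.2)]; ring
    · rw [if_pos h1, if_neg h2, if_neg (fun hh : _ ∧ _ ∧ _ => h2 hh.2.1)]; ring
  · rw [if_neg h1, if_neg (fun hh : _ ∧ _ ∧ _ => h1 hh.1)]; ring

/-- for Ψ = π(C,Φ), ζ ⟂ span{Φ} and arbitrary ξ ∈ L²(Ω),
⟨∂Ψ/∂φ_k[ζ], ∂Ψ/∂φ_l[ξ]⟩ = γ_kl(C) ⟨ζ,ξ⟩. -/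
theorem dPsi_inner_eq_gamma (Ω : Set E3) (hΩ : IsOpen Ω) (N K : ℕ)
    (hN : 1 ≤ N) (hNK : N ≤ K)
    (C : SigmaNK N K → ℂ) (hC : ∑ σ : SigmaNK N K, ‖C σ‖ ^ 2 = 1)
    (Φ : Fin K → E3 → ℂ) (hΦ : OrthoSys Ω Φ)
    (ζ ξ : E3 → ℂ) (hζ : MemLp ζ 2 (mOm Ω)) (hξ : MemLp ξ 2 (mOm Ω))
    (hperp : ∀ m : Fin K, ip2 Ω ζ (Φ m) = 0) :
    ∀ k l : Fin K,
      ipN Ω N (dPhi Ω N (mc N K C Φ) (Φ k) ζ) (dPhi Ω N (mc N K C Φ) (Φ l) ξ) =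
        gamma1 N K C k l * ip2 Ω ζ ξ := by
  intro k l
  obtain ⟨n, rfl⟩ : ∃ n, N = n + 1 := ⟨N - 1, (Nat.succ_pred_eq_of_pos hN).symm⟩
  have hζfsel : ∀ (σ : SigmaNK (n+1) K) (π : Equiv.Perm (Fin (n+1))) (i b : Fin (n+1))
      (g : E3 → ℂ), MemLp g 2 (mOm Ω) → MemLp (fsel Φ σ π i g b) 2 (mOm Ω) := by
    intro σ π i b g hg
    unfold fsel
    split_ifs
    · exact hg
    · exact hΦ.1 _
  have hFint : ∀ (σ τ : SigmaNK (n+1) K) (π ρ : Equiv.Perm (Fin (n+1))) (i j b : Fin (n+1)),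
      Integrable (fun v => fsel Φ σ π i ζ b v * conj (fsel Φ τ ρ j ξ b v)) (mOm Ω) :=
    fun σ τ π ρ i j b => integrable_mul_conj (hζfsel σ π i b ζ hζ) (hζfsel τ ρ j b ξ hξ)
  have hint : ∀ x : Fin (n+1) → E3,
      dPhi Ω (n+1) (mc (n+1) K C Φ) (Φ k) ζ x *
        conj (dPhi Ω (n+1) (mc (n+1) K C Φ) (Φ l) ξ x)
      = ∑ j : Fin (n+1), ∑ τ : SigmaNK (n+1) K, ∑ ρ : Equiv.Perm (Fin (n+1)), ∑ i : Fin (n+1), ∑ σ : SigmaNK (n+1) K, ∑ π : Equiv.Perm (Fin (n+1)), 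
          ((((Real.sqrt (Nat.factorial (n+1)) : ℂ))⁻¹ * (C σ * sgnC π * (if embOf σ (π i) = k then (1:ℂ) else 0))) *
            conj (((Real.sqrt (Nat.factorial (n+1)) : ℂ))⁻¹ * (C τ * sgnC ρ * (if embOf τ (ρ j) = l then (1:ℂ) else 0)))) *
          ∏ b : Fin (n+1), (fsel Φ σ π i ζ b (x b) * conj (fsel Φ τ ρ j ξ b (x b))) := by
    intro x
    rw [dPhi_expand Ω (n+1) K C Φ hΦ k ζ x, dPhi_expand Ω (n+1) K C Φ hΦ l ξ x]
    simp only [map_sum, map_mul, map_prod, Finset.mul_sum, Finset.sum_mul]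
    refine Finset.sum_congr rfl fun j _ => Finset.sum_congr rfl fun τ _ =>
      Finset.sum_congr rfl fun ρ _ => Finset.sum_congr rfl fun i _ =>
      Finset.sum_congr rfl fun σ _ => Finset.sum_congr rfl fun π _ => ?_
    rw [Finset.prod_mul_distrib]
    ring
  have hI : ipN Ω (n+1) (dPhi Ω (n+1) (mc (n+1) K C Φ) (Φ k) ζ)
        (dPhi Ω (n+1) (mc (n+1) K C Φ) (Φ l) ξ)
      = ∑ j : Fin (n+1), ∑ τ : SigmaNK (n+1) K, ∑ ρ : Equiv.Perm (Fin (n+1)), ∑ i : Fin (n+1), ∑ σ : SigmaNK (n+1) K, ∑ π : Equiv.Perm (Fin (n+1)), 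
          ((((Real.sqrt (Nat.factorial (n+1)) : ℂ))⁻¹ * (C σ * sgnC π * (if embOf σ (π i) = k then (1:ℂ) else 0))) *
            conj (((Real.sqrt (Nat.factorial (n+1)) : ℂ))⁻¹ * (C τ * sgnC ρ * (if embOf τ (ρ j) = l then (1:ℂ) else 0)))) *
          ∏ b : Fin (n+1), ip2 Ω (fsel Φ σ π i ζ b) (fsel Φ τ ρ j ξ b) := by
    simp only [ipN, mN]
    simp_rw [hint]
    rw [integral_finset_sum _ (fun j _ => integrable_finset_sum _ (fun τ _ =>
      integrable_finset_sum _ (fun ρ _ => integrable_finset_sum _ (fun i _ =>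
      integrable_finset_sum _ (fun σ _ => integrable_finset_sum _ (fun π _ =>
      (integrable_pi_prod (mOm Ω) _ (fun b => hFint σ τ π ρ i j b)).const_mul _))))))]
    refine Finset.sum_congr rfl fun j _ => ?_
    rw [integral_finset_sum _ (fun τ _ => integrable_finset_sum _ (fun ρ _ =>
      integrable_finset_sum _ (fun i _ => integrable_finset_sum _ (fun σ _ =>
      integrable_finset_sum _ (fun π _ =>
      (integrable_pi_prod (mOm Ω) _ (fun b => hFint σ τ π ρ i j b)).const_mul _)))))]
    refine Finset.sum_congr rfl fun τ _ => ?_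
    rw [integral_finset_sum _ (fun ρ _ => integrable_finset_sum _ (fun i _ =>
      integrable_finset_sum _ (fun σ _ => integrable_finset_sum _ (fun π _ =>
      (integrable_pi_prod (mOm Ω) _ (fun b => hFint σ τ π ρ i j b)).const_mul _))))]
    refine Finset.sum_congr rfl fun ρ _ => ?_
    rw [integral_finset_sum _ (fun i _ => integrable_finset_sum _ (fun σ _ =>
      integrable_finset_sum _ (fun π _ =>
      (integrable_pi_prod (mOm Ω) _ (fun b => hFint σ τ π ρ i j b)).const_mul _)))]
    refine Finset.sum_congr rfl fun i _ => ?_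
    rw [integral_finset_sum _ (fun σ _ => integrable_finset_sum _ (fun π _ =>
      (integrable_pi_prod (mOm Ω) _ (fun b => hFint σ τ π ρ i j b)).const_mul _))]
    refine Finset.sum_congr rfl fun σ _ => ?_
    rw [integral_finset_sum _ (fun π _ =>
      (integrable_pi_prod (mOm Ω) _ (fun b => hFint σ τ π ρ i j b)).const_mul _)]
    refine Finset.sum_congr rfl fun π _ => ?_
    rw [integral_const_mul]
    congr 1
    exact integral_pi_prod (mOm Ω) _ (fun b => hFint σ τ π ρ i j b)
  rw [hI]
  have hstep1 : ∀ (j : Fin (n+1)) (τ : SigmaNK (n+1) K) (ρ : Equiv.Perm (Fin (n+1))),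
      (∑ i : Fin (n+1), ∑ σ : SigmaNK (n+1) K, ∑ π : Equiv.Perm (Fin (n+1)), 
        ((((Real.sqrt (Nat.factorial (n+1)) : ℂ))⁻¹ * (C σ * sgnC π * (if embOf σ (π i) = k then (1:ℂ) else 0))) *
            conj (((Real.sqrt (Nat.factorial (n+1)) : ℂ))⁻¹ * (C τ * sgnC ρ * (if embOf τ (ρ j) = l then (1:ℂ) else 0)))) *
          ∏ b : Fin (n+1), ip2 Ω (fsel Φ σ π i ζ b) (fsel Φ τ ρ j ξ b))
      = ∑ σ : SigmaNK (n+1) K, ∑ π : Equiv.Perm (Fin (n+1)), 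
        ((((Real.sqrt (Nat.factorial (n+1)) : ℂ))⁻¹ * (C σ * sgnC π * (if embOf σ (π j) = k then (1:ℂ) else 0))) *
            conj (((Real.sqrt (Nat.factorial (n+1)) : ℂ))⁻¹ * (C τ * sgnC ρ * (if embOf τ (ρ j) = l then (1:ℂ) else 0)))) *
          ∏ b : Fin (n+1), ip2 Ω (fsel Φ σ π j ζ b) (fsel Φ τ ρ j ξ b) := by
    intro j τ ρ
    refine Finset.sum_eq_single j (fun i _ hij => ?_) (fun h => absurd (Finset.mem_univ _) h)
    refine Finset.sum_eq_zero fun σ _ => Finset.sum_eq_zero fun π _ => ?_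
    have h0 : ip2 Ω (fsel Φ σ π i ζ i) (fsel Φ τ ρ j ξ i) = 0 := by
      rw [show fsel Φ σ π i ζ i = ζ by simp [fsel],
        show fsel Φ τ ρ j ξ i = Φ (embOf τ (ρ i)) by simp [fsel, hij]]
      exact hperp _
    rw [Finset.prod_eq_zero (Finset.mem_univ i) h0, mul_zero]
  simp_rw [hstep1]
  have hdiag : ∀ (j : Fin (n+1)) (σ τ : SigmaNK (n+1) K) (π ρ : Equiv.Perm (Fin (n+1))),
      (∏ b : Fin (n+1), ip2 Ω (fsel Φ σ π j ζ b) (fsel Φ τ ρ j ξ b))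
      = ip2 Ω ζ ξ * ∏ b ∈ Finset.univ.erase j,
          (if embOf σ (π b) = embOf τ (ρ b) then (1:ℂ) else 0) := by
    intro j σ τ π ρ
    rw [← Finset.mul_prod_erase Finset.univ _ (Finset.mem_univ j)]
    congr 1
    · rw [show fsel Φ σ π j ζ j = ζ by simp [fsel],
        show fsel Φ τ ρ j ξ j = ξ by simp [fsel]]
    · refine Finset.prod_congr rfl fun b hb => ?_
      have hbj : b ≠ j := (Finset.mem_erase.mp hb).1
      rw [show fsel Φ σ π j ζ b = Φ (embOf σ (π b)) by simp [fsel, hbj],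
        show fsel Φ τ ρ j ξ b = Φ (embOf τ (ρ b)) by simp [fsel, hbj]]
      exact hΦ.2 _ _
  simp_rw [hdiag]
  have hnorm : ∀ (j : Fin (n+1)) (σ τ : SigmaNK (n+1) K) (π ρ : Equiv.Perm (Fin (n+1))),
      ((((Real.sqrt (Nat.factorial (n+1)) : ℂ))⁻¹ * (C σ * sgnC π * (if embOf σ (π j) = k then (1:ℂ) else 0))) *
        conj (((Real.sqrt (Nat.factorial (n+1)) : ℂ))⁻¹ * (C τ * sgnC ρ * (if embOf τ (ρ j) = l then (1:ℂ) else 0)))) *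
      (ip2 Ω ζ ξ * ∏ b ∈ Finset.univ.erase j,
        (if embOf σ (π b) = embOf τ (ρ b) then (1:ℂ) else 0))
      = (((Real.sqrt (Nat.factorial (n+1)) : ℂ))⁻¹ * conj ((Real.sqrt (Nat.factorial (n+1)) : ℂ))⁻¹ * ip2 Ω ζ ξ) * (C σ * conj (C τ)) *
        (if (embOf σ (π j) = k ∧ embOf τ (ρ j) = l ∧
            ∀ b ∈ Finset.univ.erase j, embOf σ (π b) = embOf τ (ρ b))
          then sgnC π * sgnC ρ else 0) :=
    fun j σ τ π ρ => coef_normalize ((Real.sqrt (Nat.factorial (n+1)) : ℂ))⁻¹ (ip2 Ω ζ ξ) (C σ) (C τ) σ τ π ρ j k l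
  simp_rw [hnorm]
  calc ∑ j : Fin (n+1), ∑ τ : SigmaNK (n+1) K, ∑ ρ : Equiv.Perm (Fin (n+1)), ∑ σ : SigmaNK (n+1) K, ∑ π : Equiv.Perm (Fin (n+1)), 
        ((((Real.sqrt (Nat.factorial (n+1)) : ℂ))⁻¹ * conj ((Real.sqrt (Nat.factorial (n+1)) : ℂ))⁻¹ * ip2 Ω ζ ξ) * (C σ * conj (C τ)) *
        (if (embOf σ (π j) = k ∧ embOf τ (ρ j) = l ∧
            ∀ b ∈ Finset.univ.erase j, embOf σ (π b) = embOf τ (ρ b))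
          then sgnC π * sgnC ρ else 0))
      = ∑ j : Fin (n+1), ∑ τ : SigmaNK (n+1) K, ∑ σ : SigmaNK (n+1) K, ∑ ρ : Equiv.Perm (Fin (n+1)), ∑ π : Equiv.Perm (Fin (n+1)), 
        ((((Real.sqrt (Nat.factorial (n+1)) : ℂ))⁻¹ * conj ((Real.sqrt (Nat.factorial (n+1)) : ℂ))⁻¹ * ip2 Ω ζ ξ) * (C σ * conj (C τ)) *
        (if (embOf σ (π j) = k ∧ embOf τ (ρ j) = l ∧
            ∀ b ∈ Finset.univ.erase j, embOf σ (π b) = embOf τ (ρ b))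
          then sgnC π * sgnC ρ else 0)) := Finset.sum_congr rfl fun j _ => Finset.sum_congr rfl fun τ _ =>
        Finset.sum_comm
    _ = ∑ j : Fin (n+1), ∑ σ : SigmaNK (n+1) K, ∑ τ : SigmaNK (n+1) K, ∑ ρ : Equiv.Perm (Fin (n+1)), ∑ π : Equiv.Perm (Fin (n+1)), 
        ((((Real.sqrt (Nat.factorial (n+1)) : ℂ))⁻¹ * conj ((Real.sqrt (Nat.factorial (n+1)) : ℂ))⁻¹ * ip2 Ω ζ ξ) * (C σ * conj (C τ)) *
        (if (embOf σ (π j) = k ∧ embOf τ (ρ j) = l ∧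
            ∀ b ∈ Finset.univ.erase j, embOf σ (π b) = embOf τ (ρ b))
          then sgnC π * sgnC ρ else 0)) := Finset.sum_congr rfl fun j _ => Finset.sum_comm
    _ = ∑ σ : SigmaNK (n+1) K, ∑ j : Fin (n+1), ∑ τ : SigmaNK (n+1) K, ∑ ρ : Equiv.Perm (Fin (n+1)), ∑ π : Equiv.Perm (Fin (n+1)), 
        ((((Real.sqrt (Nat.factorial (n+1)) : ℂ))⁻¹ * conj ((Real.sqrt (Nat.factorial (n+1)) : ℂ))⁻¹ * ip2 Ω ζ ξ) * (C σ * conj (C τ)) *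
        (if (embOf σ (π j) = k ∧ embOf τ (ρ j) = l ∧
            ∀ b ∈ Finset.univ.erase j, embOf σ (π b) = embOf τ (ρ b))
          then sgnC π * sgnC ρ else 0)) := Finset.sum_comm
    _ = ∑ σ : SigmaNK (n+1) K, ∑ τ : SigmaNK (n+1) K, ∑ j : Fin (n+1), ∑ ρ : Equiv.Perm (Fin (n+1)), ∑ π : Equiv.Perm (Fin (n+1)), 
        ((((Real.sqrt (Nat.factorial (n+1)) : ℂ))⁻¹ * conj ((Real.sqrt (Nat.factorial (n+1)) : ℂ))⁻¹ * ip2 Ω ζ ξ) * (C σ * conj (C τ)) *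
        (if (embOf σ (π j) = k ∧ embOf τ (ρ j) = l ∧
            ∀ b ∈ Finset.univ.erase j, embOf σ (π b) = embOf τ (ρ b))
          then sgnC π * sgnC ρ else 0)) := Finset.sum_congr rfl fun σ _ => Finset.sum_comm
    _ = ∑ σ : SigmaNK (n+1) K, ∑ τ : SigmaNK (n+1) K, ∑ j : Fin (n+1), ∑ π : Equiv.Perm (Fin (n+1)), ∑ ρ : Equiv.Perm (Fin (n+1)), 
        ((((Real.sqrt (Nat.factorial (n+1)) : ℂ))⁻¹ * conj ((Real.sqrt (Nat.factorial (n+1)) : ℂ))⁻¹ * ip2 Ω ζ ξ) * (C σ * conj (C τ)) *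
        (if (embOf σ (π j) = k ∧ embOf τ (ρ j) = l ∧
            ∀ b ∈ Finset.univ.erase j, embOf σ (π b) = embOf τ (ρ b))
          then sgnC π * sgnC ρ else 0)) := Finset.sum_congr rfl fun σ _ => Finset.sum_congr rfl fun τ _ =>
        Finset.sum_congr rfl fun j _ => Finset.sum_comm
    _ = ∑ σ : SigmaNK (n+1) K, ∑ τ : SigmaNK (n+1) K,
        (((Real.sqrt (Nat.factorial (n+1)) : ℂ))⁻¹ * conj ((Real.sqrt (Nat.factorial (n+1)) : ℂ))⁻¹ * ip2 Ω ζ ξ) * (C σ * conj (C τ)) *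
        (if k ∈ σ.1 ∧ l ∈ τ.1 ∧ σ.1.erase k = τ.1.erase l
          then (((n+1).factorial : ℕ) : ℂ) * (-1)^(posIn σ.1 k + posIn τ.1 l) else 0) := by
        refine Finset.sum_congr rfl fun σ _ => Finset.sum_congr rfl fun τ _ => ?_
        simp only [← Finset.mul_sum]
        rw [master_sum σ τ k l]
    _ = gamma1 (n+1) K C k l * ip2 Ω ζ ξ := by
        have hfact : ((Real.sqrt (Nat.factorial (n+1)) : ℂ))⁻¹ * conj ((Real.sqrt (Nat.factorial (n+1)) : ℂ))⁻¹ * (((n+1).factorial : ℕ) : ℂ) = 1 := by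
          have h1 : conj ((Real.sqrt (Nat.factorial (n+1)) : ℂ))⁻¹ = ((Real.sqrt (Nat.factorial (n+1)) : ℂ))⁻¹ := by
            rw [map_inv₀, Complex.conj_ofReal]
          have h2 : ((Real.sqrt ((n+1).factorial) : ℝ) : ℂ) *
              ((Real.sqrt ((n+1).factorial) : ℝ) : ℂ) = (((n+1).factorial : ℕ) : ℂ) := by
            rw [← Complex.ofReal_mul, Real.mul_self_sqrt (Nat.cast_nonneg _)]
            norm_cast
          rw [h1, ← mul_inv, h2]
          exact inv_mul_cancel₀ (Nat.cast_ne_zero.mpr (Nat.factorial_ne_zero _))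
        simp only [gamma1, Finset.sum_mul]
        refine Finset.sum_congr rfl fun σ _ => Finset.sum_congr rfl fun τ _ => ?_
        by_cases h : k ∈ σ.1 ∧ l ∈ τ.1 ∧ σ.1.erase k = τ.1.erase l
        · rw [if_pos h, if_pos h]
          linear_combination (((-1:ℂ))^(posIn σ.1 k + posIn τ.1 l) * C σ * conj (C τ) *
            ip2 Ω ζ ξ) * hfact
        · rw [if_neg h, if_neg h]
          ring
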